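/- arXiv:1909.06717 — 6 statements merged into one kernel-verified Lean document; each statement's English description precedes it below -/
import Mathlib

section
/- Let μ be a σ-finite measure on a measurable space X, and let p and q be probability densities with respect to μ (measurable nonnegative functions with ∫ p dμ = ∫ q dμ = 1). Define D*(x) = p(x)/(p(x) + q(x)) at points where p(x) + q(x) > 0 (and arbitrarily, say 1/2, elsewhere). Then for every measurable function D : X → (0, 1), assuming the integrals are well-defined in [−∞, ∞), one has ∫ p·log D dμ + ∫ q·log(1 − D) dμ ≤ ∫ p·log D* dμ + ∫ q·log(1 − D*) dμ. In other words, D* maximizes the adversarial objective L(D) = ∫ p log D dμ + ∫ q log(1 − D) dμ over all discriminators D : X → (0,1). -/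
open MeasureTheory

lemma pointwise_gibbs (a b t : ℝ) (ha : 0 ≤ a) (hb : 0 ≤ b)
    (ht : 0 < t) (ht1 : t < 1) :
    a * Real.log t + b * Real.log (1 - t) ≤
      a * Real.log (if 0 < a + b then a / (a + b) else 1 / 2)
        + b * Real.log (1 - (if 0 < a + b then a / (a + b) else 1 / 2)) := by
  have h1t : 0 < 1 - t := by linarith
  by_cases hab : 0 < a + b
  · simp only [hab, if_pos]
    rcases eq_or_lt_of_le ha with ha0 | ha0
    · -- a = 0
      have : a = 0 := ha0.symm
      subst this
      simp only [zero_mul, zero_add, zero_div, Real.log_zero, mul_zero, sub_zero,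
        Real.log_one]
      have : Real.log (1 - t) ≤ 0 := Real.log_nonpos (by linarith) (by linarith)
      nlinarith
    rcases eq_or_lt_of_le hb with hb0 | hb0
    · -- b = 0
      have : b = 0 := hb0.symm
      subst this
      have : a / (a + 0) = 1 := by field_simp; ring
      rw [this]
      simp only [zero_mul, add_zero, Real.log_one, mul_zero]
      have : Real.log t ≤ 0 := Real.log_nonpos (le_of_lt ht) (le_of_lt ht1)
      nlinarith
    -- a > 0, b > 0
    have h1 : 1 - a / (a + b) = b / (a + b) := by field_simp; ring
    rw [h1]
    have key1 : a * (Real.log t - Real.log (a / (a + b))) ≤ t * (a + b) - a := by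
      rw [← Real.log_div (ne_of_gt ht) (by positivity)]
      have hdiv : t / (a / (a + b)) = t * (a + b) / a := by field_simp
      rw [hdiv]
      have hx : 0 < t * (a + b) / a := by positivity
      have := mul_le_mul_of_nonneg_left (Real.log_le_sub_one_of_pos hx) ha
      calc a * Real.log (t * (a + b) / a) ≤ a * (t * (a + b) / a - 1) := this
        _ = t * (a + b) - a := by field_simp
    have key2 : b * (Real.log (1 - t) - Real.log (b / (a + b))) ≤ (1 - t) * (a + b) - b := by
      rw [← Real.log_div (ne_of_gt h1t) (by positivity)]
      have hdiv : (1 - t) / (b / (a + b)) = (1 - t) * (a + b) / b := by field_simp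
      rw [hdiv]
      have hx : 0 < (1 - t) * (a + b) / b := by positivity
      have := mul_le_mul_of_nonneg_left (Real.log_le_sub_one_of_pos hx) hb
      calc b * Real.log ((1 - t) * (a + b) / b) ≤ b * ((1 - t) * (a + b) / b - 1) := this
        _ = (1 - t) * (a + b) - b := by field_simp
    nlinarith
  · -- a + b = 0, so a = b = 0
    push_neg at hab
    have ha0 : a = 0 := by linarith
    have hb0 : b = 0 := by linarith
    simp [ha0, hb0]

/-- Proposition 1: the optimal discriminator is `D*(x) = p(x)/(p(x)+q(x))`
(where `p(x)+q(x) > 0`, and `1/2` elsewhere): for every measurable `D : X → (0,1)`,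
`∫ p·log D dμ + ∫ q·log(1-D) dμ ≤ ∫ p·log D* dμ + ∫ q·log(1-D*) dμ`. -/
theorem optimal_discriminator {X : Type*} [MeasurableSpace X]
    (μ : Measure X) [SigmaFinite μ]
    (p q : X → ℝ) (hp : Measurable p) (hq : Measurable q)
    (hp0 : ∀ x, 0 ≤ p x) (hq0 : ∀ x, 0 ≤ q x)
    (hp1 : ∫ x, p x ∂μ = 1) (hq1 : ∫ x, q x ∂μ = 1)
    (Dstar : X → ℝ)
    (hDstar : ∀ x, Dstar x = if 0 < p x + q x then p x / (p x + q x) else 1 / 2)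
    (D : X → ℝ) (hD : Measurable D) (hD01 : ∀ x, D x ∈ Set.Ioo (0 : ℝ) 1)
    (h1 : Integrable (fun x => p x * Real.log (D x)) μ)
    (h2 : Integrable (fun x => q x * Real.log (1 - D x)) μ)
    (h3 : Integrable (fun x => p x * Real.log (Dstar x)) μ)
    (h4 : Integrable (fun x => q x * Real.log (1 - Dstar x)) μ) :
    (∫ x, p x * Real.log (D x) ∂μ) + (∫ x, q x * Real.log (1 - D x) ∂μ) ≤
      (∫ x, p x * Real.log (Dstar x) ∂μ) + (∫ x, q x * Real.log (1 - Dstar x) ∂μ) := by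
  rw [← integral_add h1 h2, ← integral_add h3 h4]
  apply integral_mono (h1.add h2) (h3.add h4)
  intro x
  simp only [Pi.add_apply]
  rw [hDstar x]
  exact pointwise_gibbs (p x) (q x) (D x) (hp0 x) (hq0 x) (hD01 x).1 (hD01 x).2
end

section
/- Let μ be a σ-finite measure on a measurable space X, and let p and q be probability densities with respect to μ. Let m = (p + q)/2. Then, with the convention 0·log 0 = 0 and assuming the integrals are well-defined, ∫ p·log( p/(p + q) ) dμ + ∫ q·log( q/(p + q) ) dμ = KL(p ‖ m) + KL(q ‖ m) − log 4. -/
open MeasureTheory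

lemma ptwise (a b : ℝ) (ha : 0 ≤ a) (hb : 0 ≤ b) :
    a * Real.log (a / ((a + b) / 2)) = a * Real.log (a / (a + b)) + a * Real.log 2 := by
  rcases eq_or_lt_of_le ha with h | h
  · simp [← h]
  · have hab : 0 < a + b := by linarith
    have : a / ((a + b) / 2) = 2 * (a / (a + b)) := by field_simp
    rw [this, Real.log_mul two_ne_zero (by positivity), mul_add]
    ring

/-- for probability densities `p, q` w.r.t. `μ` and mixture `m = (p+q)/2`,
`∫ p·log(p/(p+q)) dμ + ∫ q·log(q/(p+q)) dμ = KL(p ‖ m) + KL(q ‖ m) − log 4`,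
where `KL(p ‖ m) = ∫ p·log(p/m) dμ` (convention `0·log 0 = 0`). -/
theorem adv_loss_eq_kl_sum_sub_log_four {X : Type*} [MeasurableSpace X]
    (μ : Measure X) [SigmaFinite μ]
    (p q : X → ℝ) (hp : Measurable p) (hq : Measurable q)
    (hp0 : ∀ x, 0 ≤ p x) (hq0 : ∀ x, 0 ≤ q x)
    (hp1 : ∫ x, p x ∂μ = 1) (hq1 : ∫ x, q x ∂μ = 1)
    (h1 : Integrable (fun x => p x * Real.log (p x / (p x + q x))) μ)
    (h2 : Integrable (fun x => q x * Real.log (q x / (p x + q x))) μ)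
    (h3 : Integrable (fun x => p x * Real.log (p x / ((p x + q x) / 2))) μ)
    (h4 : Integrable (fun x => q x * Real.log (q x / ((p x + q x) / 2))) μ) :
    (∫ x, p x * Real.log (p x / (p x + q x)) ∂μ) +
      (∫ x, q x * Real.log (q x / (p x + q x)) ∂μ) =
    (∫ x, p x * Real.log (p x / ((p x + q x) / 2)) ∂μ) +
      (∫ x, q x * Real.log (q x / ((p x + q x) / 2)) ∂μ) - Real.log 4 := by
  have hpe : ∀ x, p x * Real.log (p x / ((p x + q x) / 2))
      = p x * Real.log (p x / (p x + q x)) + p x * Real.log 2 :=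
    fun x => ptwise _ _ (hp0 x) (hq0 x)
  have hqe : ∀ x, q x * Real.log (q x / ((p x + q x) / 2))
      = q x * Real.log (q x / (p x + q x)) + q x * Real.log 2 := by
    intro x
    have := ptwise (q x) (p x) (hq0 x) (hp0 x)
    rwa [add_comm (q x) (p x)] at this
  have hpl : Integrable (fun x => p x * Real.log 2) μ := by
    have : (fun x => p x * Real.log 2) = fun x =>
        p x * Real.log (p x / ((p x + q x) / 2)) - p x * Real.log (p x / (p x + q x)) := by
      funext x; rw [hpe x]; ring
    rw [this]; exact h3.sub h1
  have hql : Integrable (fun x => q x * Real.log 2) μ := by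
    have : (fun x => q x * Real.log 2) = fun x =>
        q x * Real.log (q x / ((p x + q x) / 2)) - q x * Real.log (q x / (p x + q x)) := by
      funext x; rw [hqe x]; ring
    rw [this]; exact h4.sub h2
  have ip : ∫ x, p x * Real.log (p x / ((p x + q x) / 2)) ∂μ
      = (∫ x, p x * Real.log (p x / (p x + q x)) ∂μ) + Real.log 2 := by
    calc ∫ x, p x * Real.log (p x / ((p x + q x) / 2)) ∂μ
        = ∫ x, (p x * Real.log (p x / (p x + q x)) + p x * Real.log 2) ∂μ := by
          simp_rw [hpe]
      _ = (∫ x, p x * Real.log (p x / (p x + q x)) ∂μ) + ∫ x, p x * Real.log 2 ∂μ :=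
          integral_add h1 hpl
      _ = _ := by rw [integral_mul_const, hp1, one_mul]
  have iq : ∫ x, q x * Real.log (q x / ((p x + q x) / 2)) ∂μ
      = (∫ x, q x * Real.log (q x / (p x + q x)) ∂μ) + Real.log 2 := by
    calc ∫ x, q x * Real.log (q x / ((p x + q x) / 2)) ∂μ
        = ∫ x, (q x * Real.log (q x / (p x + q x)) + q x * Real.log 2) ∂μ := by
          simp_rw [hqe]
      _ = (∫ x, q x * Real.log (q x / (p x + q x)) ∂μ) + ∫ x, q x * Real.log 2 ∂μ :=
          integral_add h2 hql
      _ = _ := by rw [integral_mul_const, hq1, one_mul]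
  have h4' : Real.log 4 = Real.log 2 + Real.log 2 := by
    rw [← Real.log_mul two_ne_zero two_ne_zero]; norm_num
  rw [ip, iq, h4']; ring
end

section
/- Let μ be a σ-finite measure on a measurable space X, and let p and q be probability densities with respect to μ. Then, with the convention 0·log 0 = 0 and assuming the integrals are well-defined, ∫ p·log( p/(p + q) ) dμ + ∫ q·log( q/(p + q) ) dμ ≥ −log 4. -/
open MeasureTheory

lemma pointwise_kl_bound (a b : ℝ) (ha : 0 ≤ a) (hb : 0 ≤ b) :
    (a - b) / 2 - a * Real.log 2 ≤ a * Real.log (a / (a + b)) := by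
  rcases eq_or_lt_of_le ha with h | h
  · simp [← h]
    nlinarith [hb]
  · have hab : 0 < a + b := by linarith
    have hx : 0 < (a + b) / (2 * a) := by positivity
    have hlog := Real.log_le_sub_one_of_pos hx
    have hrw : Real.log ((a + b) / (2 * a)) =
        Real.log (a + b) - (Real.log 2 + Real.log a) := by
      rw [Real.log_div (by positivity) (by positivity),
        Real.log_mul (by norm_num) (ne_of_gt h)]
    have hrw2 : Real.log (a / (a + b)) = Real.log a - Real.log (a + b) := by
      rw [Real.log_div (ne_of_gt h) (ne_of_gt hab)]
    have h2 : Real.log a - Real.log (a + b) ≥ Real.log 2 - (a + b) / (2 * a) + 1 - 2 * Real.log 2 := by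
      rw [hrw] at hlog; linarith
    have : a * Real.log (a / (a + b)) ≥
        a * (Real.log 2 - (a + b) / (2 * a) + 1 - 2 * Real.log 2) := by
      rw [hrw2]
      exact mul_le_mul_of_nonneg_left h2 ha
    have hcancel : a * ((a + b) / (2 * a)) = (a + b) / 2 := by
      field_simp
    nlinarith [this]

/-- for probability densities `p, q` w.r.t. `μ`,
`∫ p·log(p/(p+q)) dμ + ∫ q·log(q/(p+q)) dμ ≥ − log 4` (convention `0·log 0 = 0`). -/
theorem adv_loss_ge_neg_log_four {X : Type*} [MeasurableSpace X]
    (μ : Measure X) [SigmaFinite μ]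
    (p q : X → ℝ) (hp : Measurable p) (hq : Measurable q)
    (hp0 : ∀ x, 0 ≤ p x) (hq0 : ∀ x, 0 ≤ q x)
    (hp1 : ∫ x, p x ∂μ = 1) (hq1 : ∫ x, q x ∂μ = 1)
    (h1 : Integrable (fun x => p x * Real.log (p x / (p x + q x))) μ)
    (h2 : Integrable (fun x => q x * Real.log (q x / (p x + q x))) μ) :
    (∫ x, p x * Real.log (p x / (p x + q x)) ∂μ) +
      (∫ x, q x * Real.log (q x / (p x + q x)) ∂μ) ≥ -Real.log 4 := by
  have hpI : Integrable p μ := by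
    by_contra h
    rw [integral_undef h] at hp1; norm_num at hp1
  have hqI : Integrable q μ := by
    by_contra h
    rw [integral_undef h] at hq1; norm_num at hq1
  have hA : Integrable (fun x => (p x - q x) / 2 - p x * Real.log 2) μ := by
    exact (((hpI.sub hqI).div_const 2).sub (hpI.mul_const _))
  have hB : Integrable (fun x => (q x - p x) / 2 - q x * Real.log 2) μ := by
    exact (((hqI.sub hpI).div_const 2).sub (hqI.mul_const _))
  have i1 : ∫ x, (p x - q x) / 2 - p x * Real.log 2 ∂μ ≤
      ∫ x, p x * Real.log (p x / (p x + q x)) ∂μ :=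
    integral_mono hA h1 fun x => pointwise_kl_bound (p x) (q x) (hp0 x) (hq0 x)
  have i2 : ∫ x, (q x - p x) / 2 - q x * Real.log 2 ∂μ ≤
      ∫ x, q x * Real.log (q x / (p x + q x)) ∂μ := by
    have := fun x => pointwise_kl_bound (q x) (p x) (hq0 x) (hp0 x)
    refine integral_mono hB h2 fun x => ?_
    simpa [add_comm] using this x
  have hA1 : Integrable (fun x => (p x - q x) / 2) μ := by
    exact (hpI.sub hqI).div_const 2
  have hA2 : Integrable (fun x => p x * Real.log 2) μ := hpI.mul_const _
  have hB1 : Integrable (fun x => (q x - p x) / 2) μ := by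
    exact (hqI.sub hpI).div_const 2
  have hB2 : Integrable (fun x => q x * Real.log 2) μ := hqI.mul_const _
  have hpq : Integrable (fun x => p x - q x) μ := hpI.sub hqI
  have hqp : Integrable (fun x => q x - p x) μ := hqI.sub hpI
  have e1 : ∫ x, (p x - q x) / 2 - p x * Real.log 2 ∂μ = -Real.log 2 := by
    rw [integral_sub hA1 hA2, integral_div, integral_sub hpI hqI,
      integral_mul_const, hp1, hq1]
    ring
  have e2 : ∫ x, (q x - p x) / 2 - q x * Real.log 2 ∂μ = -Real.log 2 := by
    rw [integral_sub hB1 hB2, integral_div, integral_sub hqI hpI,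
      integral_mul_const, hp1, hq1]
    ring
  have hl4 : Real.log 4 = 2 * Real.log 2 := by
    rw [show (4:ℝ) = 2^2 by norm_num, Real.log_pow]; push_cast; ring
  rw [ge_iff_le, hl4]
  linarith [i1, i2, e1.symm ▸ i1, e2.symm ▸ i2]
end

section
/- Let μ be a σ-finite measure on a measurable space X, and let p and q be probability densities with respect to μ such that the integrals below are well-defined. Then ∫ p·log( p/(p + q) ) dμ + ∫ q·log( q/(p + q) ) dμ = −log 4 if and only if p = q μ-almost everywhere. -/
open MeasureTheory

lemma key_pt (a b : ℝ) (ha : 0 ≤ a) (hb : 0 ≤ b) :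
    0 ≤ a * Real.log (a / (a + b)) + b * Real.log (b / (a + b)) + (a + b) * Real.log 2 ∧
    (a * Real.log (a / (a + b)) + b * Real.log (b / (a + b)) + (a + b) * Real.log 2 = 0 ↔
      a = b) := by
  rcases eq_or_lt_of_le (add_nonneg ha hb) with hs | hs
  · have ha0 : a = 0 := by linarith
    have hb0 : b = 0 := by linarith
    simp [ha0, hb0]
  · set s := a + b with hsdef
    have hs0 : s ≠ 0 := hs.ne'
    set t := a / s with htdef
    have hbt : b / s = 1 - t := by
      field_simp [htdef]
      rw [htdef, mul_sub, mul_one, mul_div_assoc', mul_comm s a, mul_div_assoc, div_self hs0, mul_one]; linarith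
    have hst : s * t = a := by rw [htdef, mul_div_assoc', mul_comm s a, mul_div_assoc, div_self hs0, mul_one]
    have hst' : s * (1 - t) = b := by
      rw [← hbt]; field_simp
    have e1 : a * Real.log (a / s) = s * t * Real.log t := by
      rw [← htdef, hst]
    have e2 : b * Real.log (b / s) = s * (1 - t) * Real.log (1 - t) := by
      rw [hbt, hst']
    have hmain : a * Real.log (a / s) + b * Real.log (b / s) + s * Real.log 2
        = s * (Real.log 2 - Real.binEntropy t) := by
      rw [e1, e2, Real.binEntropy, Real.log_inv, Real.log_inv]
      ring
    rw [hmain]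
    have hle : Real.binEntropy t ≤ Real.log 2 := Real.binEntropy_le_log_two
    constructor
    · exact mul_nonneg hs.le (by linarith)
    · rw [mul_eq_zero]
      constructor
      · rintro (h | h)
        · exact absurd h hs0
        · have ht : t = 2⁻¹ := by
            by_contra hne
            have := Real.binEntropy_lt_log_two.mpr hne
            linarith
          have : a / s = 2⁻¹ := ht
          have : 2 * a = s := by
            field_simp at this
            linarith
          linarith [hsdef]
      · intro hab
        right
        have hbb : (0:ℝ) < b + b := by rw [hsdef, hab] at hs; exact hs
        have ht : t = 2⁻¹ := by
          rw [htdef, hsdef, hab, div_eq_iff hbb.ne']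
          ring
        rw [ht, Real.binEntropy_two_inv]
        ring

/-- for probability densities `p, q` w.r.t. `μ`,
`∫ p·log(p/(p+q)) dμ + ∫ q·log(q/(p+q)) dμ = − log 4` iff `p = q` `μ`-a.e. -/
theorem adv_loss_eq_neg_log_four_iff {X : Type*} [MeasurableSpace X]
    (μ : Measure X) [SigmaFinite μ]
    (p q : X → ℝ) (hp : Measurable p) (hq : Measurable q)
    (hp0 : ∀ x, 0 ≤ p x) (hq0 : ∀ x, 0 ≤ q x)
    (hp1 : ∫ x, p x ∂μ = 1) (hq1 : ∫ x, q x ∂μ = 1)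
    (h1 : Integrable (fun x => p x * Real.log (p x / (p x + q x))) μ)
    (h2 : Integrable (fun x => q x * Real.log (q x / (p x + q x))) μ) :
    ((∫ x, p x * Real.log (p x / (p x + q x)) ∂μ) +
      (∫ x, q x * Real.log (q x / (p x + q x)) ∂μ) = -Real.log 4) ↔ p =ᵐ[μ] q := by
  have hip : Integrable p μ := by
    by_contra h; rw [integral_undef h] at hp1; norm_num at hp1
  have hiq : Integrable q μ := by
    by_contra h; rw [integral_undef h] at hq1; norm_num at hq1
  set F : X → ℝ := fun x =>
    p x * Real.log (p x / (p x + q x)) + q x * Real.log (q x / (p x + q x)) +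
      (p x + q x) * Real.log 2 with hF
  have hiF : Integrable F μ := (h1.add h2).add ((hip.add hiq).mul_const _)
  have hF0 : ∀ x, 0 ≤ F x := fun x => (key_pt _ _ (hp0 x) (hq0 x)).1
  have hFint : ∫ x, F x ∂μ =
      (∫ x, p x * Real.log (p x / (p x + q x)) ∂μ) +
        (∫ x, q x * Real.log (q x / (p x + q x)) ∂μ) + Real.log 4 := by
    have h12 : Integrable (fun x => p x * Real.log (p x / (p x + q x)) +
        q x * Real.log (q x / (p x + q x))) μ := h1.add h2
    have h3 : Integrable (fun x => (p x + q x) * Real.log 2) μ :=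
      (hip.add hiq).mul_const _
    have hpq : Integrable (fun x => p x + q x) μ := hip.add hiq
    rw [hF]
    rw [integral_add h12 h3, integral_add h1 h2, integral_mul_const,
        integral_add hip hiq, hp1, hq1]
    have : Real.log 4 = 2 * Real.log 2 := by
      rw [show (4:ℝ) = 2 ^ 2 by norm_num, Real.log_pow]; norm_num
    rw [this]; ring
  have hiff : ((∫ x, p x * Real.log (p x / (p x + q x)) ∂μ) +
      (∫ x, q x * Real.log (q x / (p x + q x)) ∂μ) = -Real.log 4) ↔
      ∫ x, F x ∂μ = 0 := by
    rw [hFint]; constructor <;> intro h <;> linarith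
  rw [hiff, integral_eq_zero_iff_of_nonneg hF0 hiF]
  constructor
  · intro h
    filter_upwards [h] with x hx
    exact (key_pt _ _ (hp0 x) (hq0 x)).2.mp hx
  · intro h
    filter_upwards [h] with x hx
    exact (key_pt _ _ (hp0 x) (hq0 x)).2.mpr hx
end

section
/- Let μ be a σ-finite measure on a measurable space X, let p_S and p_g be probability densities with respect to μ, and let β > 0. Let L, N be positive integers, d a positive integer; for i = 1,…,N let z_i ∈ (0,1)^L, f_i ∈ (0,1)^L, and x_i, g_i ∈ ℝ^d. Define the objective C = (1/N)·Σ_{i=1}^N Σ_{j=1}^L [ −z_{ij}·log f_{ij} − (1 − z_{ij})·log(1 − f_{ij}) ] + (1/N)·Σ_{i=1}^N ‖g_i − x_i‖² + β·( ∫ p_S·log( p_S/(p_S + p_g) ) dμ + ∫ p_g·log( p_g/(p_S + p_g) ) dμ ), assuming the integrals are well-defined. Then C ≥ (1/N)·Σ_{i=1}^N Σ_{j=1}^L [ −z_{ij}·log z_{ij} − (1 − z_{ij})·log(1 − z_{ij}) ] − β·log 4. -/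
open MeasureTheory Finset

private lemma key_log (a b : ℝ) (ha : 0 < a) (hb : 0 < b) :
    a * Real.log (b / a) ≤ b - a := by
  have h := Real.log_le_sub_one_of_pos (div_pos hb ha)
  have := mul_le_mul_of_nonneg_left h ha.le
  calc a * Real.log (b / a) ≤ a * (b / a - 1) := this
    _ = b - a := by field_simp

private lemma gibbs (a b : ℝ) (ha : a ∈ Set.Ioo (0:ℝ) 1) (hb : b ∈ Set.Ioo (0:ℝ) 1) :
    -a * Real.log b - (1 - a) * Real.log (1 - b) ≥
    -a * Real.log a - (1 - a) * Real.log (1 - a) := by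
  obtain ⟨ha0, ha1⟩ := ha
  obtain ⟨hb0, hb1⟩ := hb
  have h1 := key_log a b ha0 hb0
  have h2 := key_log (1 - a) (1 - b) (by linarith) (by linarith)
  rw [Real.log_div hb0.ne' ha0.ne', mul_sub] at h1
  rw [Real.log_div (by linarith : (1:ℝ) - b ≠ 0) (by linarith : (1:ℝ) - a ≠ 0),
    mul_sub] at h2
  linarith

/-- pointwise: `a * log (a / (a + c)) ≥ a - (a+c)/2 - a * log 2` for `a, c ≥ 0`. -/
private lemma pointwise_bound (a c : ℝ) (ha : 0 ≤ a) (hc : 0 ≤ c) :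
    a - (a + c) / 2 - a * Real.log 2 ≤ a * Real.log (a / (a + c)) := by
  rcases eq_or_lt_of_le ha with h | h
  · simp [← h]
    linarith
  · have hs : 0 < a + c := by linarith
    have h1 := key_log a ((a + c) / 2) h (by linarith)
    have hlog : Real.log ((a + c) / 2 / a) = Real.log (a + c) - Real.log 2 - Real.log a := by
      rw [Real.log_div (by positivity) h.ne', Real.log_div hs.ne' (by norm_num)]
    rw [hlog] at h1
    have hlog2 : Real.log (a / (a + c)) = Real.log a - Real.log (a + c) := by
      rw [Real.log_div h.ne' hs.ne']
    rw [hlog2]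
    nlinarith

/-- lower bound of Proposition 2: the objective consisting of
cross-entropy classification loss, least-squares generation loss, and `β` times the
adversarial loss at the optimal discriminator is bounded below by the average binary
entropy of the confidence vectors `z_i` minus `β·log 4`. -/
theorem objective_lower_bound {X : Type*} [MeasurableSpace X]
    (μ : Measure X) [SigmaFinite μ]
    (pS pg : X → ℝ) (hpS : Measurable pS) (hpg : Measurable pg)
    (hpS0 : ∀ t, 0 ≤ pS t) (hpg0 : ∀ t, 0 ≤ pg t)
    (hpS1 : ∫ t, pS t ∂μ = 1) (hpg1 : ∫ t, pg t ∂μ = 1)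
    (β : ℝ) (hβ : 0 < β)
    (L N d : ℕ) (hL : 0 < L) (hN : 0 < N) (hd : 0 < d)
    (z f : Fin N → Fin L → ℝ)
    (hz : ∀ i j, z i j ∈ Set.Ioo (0 : ℝ) 1)
    (hf : ∀ i j, f i j ∈ Set.Ioo (0 : ℝ) 1)
    (x g : Fin N → EuclideanSpace ℝ (Fin d))
    (h1 : Integrable (fun t => pS t * Real.log (pS t / (pS t + pg t))) μ)
    (h2 : Integrable (fun t => pg t * Real.log (pg t / (pS t + pg t))) μ) :
    (1 / N : ℝ) * (∑ i, ∑ j,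
        (-(z i j) * Real.log (f i j) - (1 - z i j) * Real.log (1 - f i j)))
      + (1 / N : ℝ) * (∑ i, ‖g i - x i‖ ^ 2)
      + β * ((∫ t, pS t * Real.log (pS t / (pS t + pg t)) ∂μ) +
             (∫ t, pg t * Real.log (pg t / (pS t + pg t)) ∂μ)) ≥
    (1 / N : ℝ) * (∑ i, ∑ j,
        (-(z i j) * Real.log (z i j) - (1 - z i j) * Real.log (1 - z i j)))
      - β * Real.log 4 := by
  -- Integrability of the densities
  have hiS : Integrable pS μ := by
    by_contra h; rw [integral_undef h] at hpS1; norm_num at hpS1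
  have hig : Integrable pg μ := by
    by_contra h; rw [integral_undef h] at hpg1; norm_num at hpg1
  -- lower bound for the first integral
  have hintS : ∫ t, pS t * Real.log (pS t / (pS t + pg t)) ∂μ ≥ -Real.log 2 := by
    have hRint : Integrable (fun t => pS t - (pS t + pg t) / 2 - pS t * Real.log 2) μ := by
      apply Integrable.sub
      · exact hiS.sub ((hiS.add hig).div_const 2)
      · exact hiS.mul_const _
    have hmono := integral_mono hRint h1
      (fun t => pointwise_bound (pS t) (pg t) (hpS0 t) (hpg0 t))
    have heq : (fun t => pS t - (pS t + pg t) / 2 - pS t * Real.log 2) =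
        fun t => pS t * (1/2 - Real.log 2) - pg t * (1/2) := by funext t; ring
    have hcalc : ∫ t, (pS t - (pS t + pg t) / 2 - pS t * Real.log 2) ∂μ = -Real.log 2 := by
      rw [heq, integral_sub (hiS.mul_const _) (hig.mul_const _),
        integral_mul_const, integral_mul_const, hpS1, hpg1]
      ring
    linarith [hmono, hcalc.symm ▸ hmono]
  have hintG : ∫ t, pg t * Real.log (pg t / (pS t + pg t)) ∂μ ≥ -Real.log 2 := by
    have hRint : Integrable (fun t => pg t - (pS t + pg t) / 2 - pg t * Real.log 2) μ := by
      apply Integrable.sub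
      · exact hig.sub ((hiS.add hig).div_const 2)
      · exact hig.mul_const _
    have hmono := integral_mono hRint h2
      (fun t => by
        have := pointwise_bound (pg t) (pS t) (hpg0 t) (hpS0 t)
        simpa [add_comm] using this)
    have heq : (fun t => pg t - (pS t + pg t) / 2 - pg t * Real.log 2) =
        fun t => pg t * (1/2 - Real.log 2) - pS t * (1/2) := by funext t; ring
    have hcalc : ∫ t, (pg t - (pS t + pg t) / 2 - pg t * Real.log 2) ∂μ = -Real.log 2 := by
      rw [heq, integral_sub (hig.mul_const _) (hiS.mul_const _),
        integral_mul_const, integral_mul_const, hpS1, hpg1]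
      ring
    linarith [hmono, hcalc.symm ▸ hmono]
  -- log 4 = 2 log 2
  have hlog4 : Real.log 4 = 2 * Real.log 2 := by
    rw [show (4:ℝ) = 2 ^ 2 by norm_num, Real.log_pow]; push_cast; ring
  -- cross-entropy bound
  have hCE : ∑ i, ∑ j, (-(z i j) * Real.log (z i j) - (1 - z i j) * Real.log (1 - z i j)) ≤
      ∑ i, ∑ j, (-(z i j) * Real.log (f i j) - (1 - z i j) * Real.log (1 - f i j)) := by
    apply sum_le_sum; intro i _
    apply sum_le_sum; intro j _
    exact gibbs (z i j) (f i j) (hz i j) (hf i j)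
  have hNpos : (0:ℝ) < (1 / N : ℝ) := by positivity
  have hCE' : (1 / N : ℝ) * (∑ i, ∑ j,
        (-(z i j) * Real.log (z i j) - (1 - z i j) * Real.log (1 - z i j))) ≤
      (1 / N : ℝ) * (∑ i, ∑ j,
        (-(z i j) * Real.log (f i j) - (1 - z i j) * Real.log (1 - f i j))) :=
    mul_le_mul_of_nonneg_left hCE hNpos.le
  have hnorm : (0:ℝ) ≤ (1 / N : ℝ) * (∑ i, ‖g i - x i‖ ^ 2) := by positivity
  have hadv : β * ((∫ t, pS t * Real.log (pS t / (pS t + pg t)) ∂μ) +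
      (∫ t, pg t * Real.log (pg t / (pS t + pg t)) ∂μ)) ≥ -(β * Real.log 4) := by
    have : (∫ t, pS t * Real.log (pS t / (pS t + pg t)) ∂μ) +
        (∫ t, pg t * Real.log (pg t / (pS t + pg t)) ∂μ) ≥ -Real.log 4 := by
      rw [hlog4]; linarith
    nlinarith
  linarith
end

section
/- Let μ be a σ-finite measure on a measurable space X, let p_S and p_g be probability densities with respect to μ, and let β > 0. Let L, N, d be positive integers; for i = 1,…,N let z_i ∈ (0,1)^L, f_i ∈ (0,1)^L, and x_i, g_i ∈ ℝ^d. Define C = (1/N)·Σ_{i=1}^N Σ_{j=1}^L [ −z_{ij}·log f_{ij} − (1 − z_{ij})·log(1 − f_{ij}) ] + (1/N)·Σ_{i=1}^N ‖g_i − x_i‖² + β·( ∫ p_S·log( p_S/(p_S + p_g) ) dμ + ∫ p_g·log( p_g/(p_S + p_g) ) dμ ). If f_i = z_i for all i, g_i = x_i for all i, and p_g = p_S μ-almost everywhere, then C = (1/N)·Σ_{i=1}^N Σ_{j=1}^L [ −z_{ij}·log z_{ij} − (1 − z_{ij})·log(1 − z_{ij}) ] − β·log 4; that is, the lower bound of Proposition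 2 is attained under these conditions. -/
open MeasureTheory Finset

lemma key_pointwise (a : ℝ) (ha : 0 ≤ a) :
    a * Real.log (a / (a + a)) = -Real.log 2 * a := by
  rcases eq_or_lt_of_le ha with h | h
  · simp [← h]
  · have h2 : a / (a + a) = 1 / 2 := by
      field_simp
      ring
    rw [h2, one_div, Real.log_inv]
    ring

/-- attainment part of Proposition 2: the lower bound is attained when
`f_i = z_i`, `g_i = x_i` for all `i`, and `p_g = p_S` `μ`-a.e. -/
theorem objective_lower_bound_attained {X : Type*} [MeasurableSpace X]
    (μ : Measure X) [SigmaFinite μ]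
    (pS pg : X → ℝ) (hpS : Measurable pS) (hpg : Measurable pg)
    (hpS0 : ∀ t, 0 ≤ pS t) (hpg0 : ∀ t, 0 ≤ pg t)
    (hpS1 : ∫ t, pS t ∂μ = 1) (hpg1 : ∫ t, pg t ∂μ = 1)
    (β : ℝ) (hβ : 0 < β)
    (L N d : ℕ) (hL : 0 < L) (hN : 0 < N) (hd : 0 < d)
    (z f : Fin N → Fin L → ℝ)
    (hz : ∀ i j, z i j ∈ Set.Ioo (0 : ℝ) 1)
    (hf : ∀ i j, f i j ∈ Set.Ioo (0 : ℝ) 1)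
    (x g : Fin N → EuclideanSpace ℝ (Fin d))
    (hfz : ∀ i, f i = z i) (hgx : ∀ i, g i = x i)
    (hpgS : pg =ᵐ[μ] pS) :
    (1 / N : ℝ) * (∑ i, ∑ j,
        (-(z i j) * Real.log (f i j) - (1 - z i j) * Real.log (1 - f i j)))
      + (1 / N : ℝ) * (∑ i, ‖g i - x i‖ ^ 2)
      + β * ((∫ t, pS t * Real.log (pS t / (pS t + pg t)) ∂μ) +
             (∫ t, pg t * Real.log (pg t / (pS t + pg t)) ∂μ)) =
    (1 / N : ℝ) * (∑ i, ∑ j,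
        (-(z i j) * Real.log (z i j) - (1 - z i j) * Real.log (1 - z i j)))
      - β * Real.log 4 := by
  have hI1 : (∫ t, pS t * Real.log (pS t / (pS t + pg t)) ∂μ) = -Real.log 2 := by
    have : (∫ t, pS t * Real.log (pS t / (pS t + pg t)) ∂μ)
        = ∫ t, -Real.log 2 * pS t ∂μ := by
      refine integral_congr_ae ?_
      filter_upwards [hpgS] with t ht
      rw [ht]
      exact key_pointwise (pS t) (hpS0 t)
    rw [this, integral_const_mul, hpS1, mul_one]
  have hI2 : (∫ t, pg t * Real.log (pg t / (pS t + pg t)) ∂μ) = -Real.log 2 := by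
    have : (∫ t, pg t * Real.log (pg t / (pS t + pg t)) ∂μ)
        = ∫ t, -Real.log 2 * pS t ∂μ := by
      refine integral_congr_ae ?_
      filter_upwards [hpgS] with t ht
      rw [ht]
      exact key_pointwise (pS t) (hpS0 t)
    rw [this, integral_const_mul, hpS1, mul_one]
  have hsum0 : (∑ i, ‖g i - x i‖ ^ 2 : ℝ) = 0 := by
    apply Finset.sum_eq_zero
    intro i _
    rw [hgx i]
    simp
  have hfz' : ∀ i j, f i j = z i j := fun i j => by rw [hfz i]
  have hlog4 : Real.log 4 = 2 * Real.log 2 := by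
    rw [show (4 : ℝ) = 2 ^ 2 by norm_num, Real.log_pow]
    norm_num
  simp only [hfz', hsum0, hI1, hI2, hlog4, mul_zero, add_zero]
  ring
end
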